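/- Let p be a prime and n ≥ 1. Both A^{n−1} and P_n are self-centralizing in Sym(F_p^n): the centralizer of A^{n−1} in Sym(F_p^n) is contained in A^{n−1}, and the centralizer of P_n in Sym(F_p^n) is contained in P_n. -/

import Mathlib

variable (p n : ℕ)

/-- The underlying function of the generator `σ_i`. -/
def sigmaFun (i : Fin n) (lam : Fin n → ZMod p) : Fin n → ZMod p :=
  fun k => if k = i ∧ ∀ j : Fin n, j < i → lam j = 0 then lam k + 1 else lam k

lemma sigmaFun_apply_ne (i : Fin n) (lam : Fin n → ZMod p) {k : Fin n} (h : k ≠ i) :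
    sigmaFun p n i lam k = lam k := by
  simp [sigmaFun, h]

/-- The inverse function of `σ_i`. -/
def sigmaInvFun (i : Fin n) (lam : Fin n → ZMod p) : Fin n → ZMod p :=
  fun k => if k = i ∧ ∀ j : Fin n, j < i → lam j = 0 then lam k - 1 else lam k

lemma sigmaInvFun_apply_ne (i : Fin n) (lam : Fin n → ZMod p) {k : Fin n} (h : k ≠ i) :
    sigmaInvFun p n i lam k = lam k := by
  simp [sigmaInvFun, h]

lemma sigmaFun_cond (i : Fin n) (lam : Fin n → ZMod p) :
    (∀ j : Fin n, j < i → sigmaFun p n i lam j = 0) ↔ (∀ j : Fin n, j < i → lam j = 0) := by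
  constructor
  · intro h j hj
    have := h j hj
    rwa [sigmaFun_apply_ne p n i lam (ne_of_lt hj)] at this
  · intro h j hj
    rw [sigmaFun_apply_ne p n i lam (ne_of_lt hj)]
    exact h j hj

lemma sigmaInvFun_cond (i : Fin n) (lam : Fin n → ZMod p) :
    (∀ j : Fin n, j < i → sigmaInvFun p n i lam j = 0) ↔ (∀ j : Fin n, j < i → lam j = 0) := by
  constructor
  · intro h j hj
    have := h j hj
    rwa [sigmaInvFun_apply_ne p n i lam (ne_of_lt hj)] at this
  · intro h j hj
    rw [sigmaInvFun_apply_ne p n i lam (ne_of_lt hj)]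
    exact h j hj

/-- The generator `σ_i` of the Sylow `p`-subgroup of `Sym(F_p^n)`: it fixes
`(λ_0, …, λ_{n-1})` if `λ_j ≠ 0` for some `j < i`, and otherwise replaces the entry
`λ_i` by `λ_i + 1`. -/
def sigmaPerm (i : Fin n) : Equiv.Perm (Fin n → ZMod p) where
  toFun := sigmaFun p n i
  invFun := sigmaInvFun p n i
  left_inv := by
    intro lam
    funext k
    by_cases hk : k = i
    · subst hk
      show sigmaInvFun p n k (sigmaFun p n k lam) k = lam k
      by_cases hc : ∀ j : Fin n, j < k → lam j = 0
      · have hC : ∀ j : Fin n, j < k → sigmaFun p n k lam j = 0 :=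
          (sigmaFun_cond p n k lam).mpr hc
        unfold sigmaInvFun
        rw [if_pos ⟨rfl, hC⟩]
        unfold sigmaFun
        rw [if_pos ⟨rfl, hc⟩]
        ring
      · have hC : ¬ ∀ j : Fin n, j < k → sigmaFun p n k lam j = 0 :=
          fun h => hc ((sigmaFun_cond p n k lam).mp h)
        unfold sigmaInvFun
        rw [if_neg (by tauto)]
        unfold sigmaFun
        rw [if_neg (by tauto)]
    · exact (sigmaInvFun_apply_ne p n i _ hk).trans (sigmaFun_apply_ne p n i lam hk)
  right_inv := by
    intro lam
    funext k
    by_cases hk : k = i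
    · subst hk
      show sigmaFun p n k (sigmaInvFun p n k lam) k = lam k
      by_cases hc : ∀ j : Fin n, j < k → lam j = 0
      · have hC : ∀ j : Fin n, j < k → sigmaInvFun p n k lam j = 0 :=
          (sigmaInvFun_cond p n k lam).mpr hc
        unfold sigmaFun
        rw [if_pos ⟨rfl, hC⟩]
        unfold sigmaInvFun
        rw [if_pos ⟨rfl, hc⟩]
        ring
      · have hC : ¬ ∀ j : Fin n, j < k → sigmaInvFun p n k lam j = 0 :=
          fun h => hc ((sigmaInvFun_cond p n k lam).mp h)
        unfold sigmaFun
        rw [if_neg (by tauto)]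
        unfold sigmaInvFun
        rw [if_neg (by tauto)]
    · exact (sigmaFun_apply_ne p n i _ hk).trans (sigmaInvFun_apply_ne p n i lam hk)

/-- `P_n = ⟨σ_0, …, σ_{n-1}⟩`, a Sylow `p`-subgroup of `Sym(F_p^n)`. -/
def PSyl : Subgroup (Equiv.Perm (Fin n → ZMod p)) :=
  Subgroup.closure (Set.range (sigmaPerm p n))


/-- `A^{n-1}`, the normal closure of `⟨σ_{n-1}⟩` in `P_n`: the subgroup generated by
all `P_n`-conjugates of `σ_{n-1}`. -/
def Abase (hn : 1 ≤ n) : Subgroup (Equiv.Perm (Fin n → ZMod p)) :=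
  Subgroup.closure
    {x | ∃ g ∈ PSyl p n, x = g * sigmaPerm p n ⟨n - 1, by omega⟩ * g⁻¹}


/-! ### Auxiliary development -/

section AuxDev

variable (m : ℕ)

local notation "L" => Fin.last m

/-- Translation on the last coordinate by an amount depending only on the other coordinates. -/
def trP (f : (Fin (m+1) → ZMod p) → ZMod p) : Equiv.Perm (Fin (m+1) → ZMod p) where
  toFun x := Function.update x L (x L + f (Function.update x L 0))
  invFun x := Function.update x L (x L - f (Function.update x L 0))
  left_inv x := by
    funext j
    by_cases hj : j = L
    · subst hj
      simp [Function.update_idem]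
    · simp [Function.update_of_ne hj]
  right_inv x := by
    funext j
    by_cases hj : j = L
    · subst hj
      simp [Function.update_idem]
    · simp [Function.update_of_ne hj]

lemma trP_apply (f : (Fin (m+1) → ZMod p) → ZMod p) (x : Fin (m+1) → ZMod p) :
    trP p m f x = Function.update x L (x L + f (Function.update x L 0)) := rfl

lemma trP_zero : trP p m 0 = 1 := by
  ext x j
  by_cases hj : j = L
  · subst hj; simp [trP_apply]
  · simp [trP_apply, Function.update_of_ne hj]

lemma trP_congr (f g : (Fin (m+1) → ZMod p) → ZMod p)
    (h : ∀ x, x L = 0 → f x = g x) : trP p m f = trP p m g := by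
  ext x j
  rw [trP_apply, trP_apply, h _ (by simp)]

lemma trP_mul (f g : (Fin (m+1) → ZMod p) → ZMod p) :
    trP p m f * trP p m g = trP p m (f + g) := by
  ext x j
  show trP p m f (trP p m g x) j = _
  rw [trP_apply, trP_apply, trP_apply]
  by_cases hj : j = L
  · subst hj
    simp [Function.update_idem, Function.update_of_ne, add_assoc, add_comm (f _) (g _)]
  · simp [Function.update_of_ne hj]

lemma trP_pow (f : (Fin (m+1) → ZMod p) → ZMod p) (k : ℕ) :
    trP p m f ^ k = trP p m (k • f) := by
  induction k with
  | zero => simp [trP_zero]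
  | succ k ih =>
      rw [pow_succ, ih, trP_mul, succ_nsmul]

end AuxDev

section AuxDev2

variable (m : ℕ)

local notation "L" => Fin.last m

/-- The indicator translation on the fiber of `v`. -/
def tP (v : Fin (m+1) → ZMod p) : Equiv.Perm (Fin (m+1) → ZMod p) :=
  trP p m (fun x => if ∀ j, j ≠ L → x j = v j then 1 else 0)

lemma tP_apply (v x : Fin (m+1) → ZMod p) :
    tP p m v x =
      if ∀ j, j ≠ L → x j = v j then Function.update x L (x L + 1) else x := by
  rw [tP, trP_apply]
  have hcond : (∀ j, j ≠ L → Function.update x L 0 j = v j) ↔ (∀ j, j ≠ L → x j = v j) := by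
    constructor
    · intro h j hj; have := h j hj; rwa [Function.update_of_ne hj] at this
    · intro h j hj; rw [Function.update_of_ne hj]; exact h j hj
  by_cases hc : ∀ j, j ≠ L → x j = v j
  · rw [if_pos (hcond.mpr hc), if_pos hc]
  · rw [if_neg (fun h => hc (hcond.mp h)), if_neg hc, add_zero, Function.update_eq_self]

lemma tP_congr (v w : Fin (m+1) → ZMod p) (h : ∀ j, j ≠ L → v j = w j) :
    tP p m v = tP p m w := by
  ext x j
  have : (∀ j, j ≠ L → x j = v j) ↔ (∀ j, j ≠ L → x j = w j) := by
    constructor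
    · intro hh j hj; rw [hh j hj, h j hj]
    · intro hh j hj; rw [hh j hj, ← h j hj]
  rw [tP_apply, tP_apply]
  by_cases hc : ∀ j, j ≠ L → x j = v j
  · rw [if_pos hc, if_pos (this.mp hc)]
  · rw [if_neg hc, if_neg (fun hh => hc (this.mpr hh))]

/-- Formula for powers of the generators. -/
lemma sigma_pow_apply (i : Fin (m+1)) (k : ℕ) (x : Fin (m+1) → ZMod p) :
    (sigmaPerm p (m+1) i ^ k) x =
      if ∀ l, l < i → x l = 0 then Function.update x i (x i + (k : ZMod p)) else x := by
  induction k with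
  | zero =>
      simp only [pow_zero, Equiv.Perm.coe_one, id_eq, Nat.cast_zero, add_zero,
        Function.update_eq_self]
      split <;> rfl
  | succ k ih =>
      rw [pow_succ', Equiv.Perm.mul_apply, ih]
      by_cases hc : ∀ l, l < i → x l = 0
      · rw [if_pos hc, if_pos hc]
        have hc' : ∀ l, l < i → Function.update x i (x i + (k : ZMod p)) l = 0 := by
          intro l hl
          rw [Function.update_of_ne (ne_of_lt hl)]
          exact hc l hl
        show sigmaFun p (m+1) i _ = _
        funext j
        by_cases hj : j = i
        · subst hj
          rw [sigmaFun, if_pos ⟨rfl, hc'⟩, Function.update_self, Function.update_self]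
          push_cast
          ring
        · rw [sigmaFun, if_neg (fun h => hj h.1), Function.update_of_ne hj,
            Function.update_of_ne hj]
      · rw [if_neg hc, if_neg hc]
        show sigmaFun p (m+1) i _ = _
        funext j
        rw [sigmaFun, if_neg (fun h => hc h.2)]

lemma sigma_pow_inv_apply (i : Fin (m+1)) (k : ℕ) (x : Fin (m+1) → ZMod p) :
    (sigmaPerm p (m+1) i ^ k)⁻¹ x =
      if ∀ l, l < i → x l = 0 then Function.update x i (x i - (k : ZMod p)) else x := by
  have h := Equiv.Perm.inv_def (sigmaPerm p (m+1) i ^ k)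
  rw [h, Equiv.symm_apply_eq, sigma_pow_apply]
  by_cases hc : ∀ l, l < i → x l = 0
  · rw [if_pos hc]
    have hc' : ∀ l, l < i → Function.update x i (x i - (k : ZMod p)) l = 0 := by
      intro l hl
      rw [Function.update_of_ne (ne_of_lt hl)]
      exact hc l hl
    rw [if_pos hc', Function.update_idem, Function.update_self, sub_add_cancel,
      Function.update_eq_self]
  · simp only [if_neg hc]

end AuxDev2

section AuxDev3

variable (m : ℕ)

local notation "L" => Fin.last m

lemma key_fun (i : Fin (m+1)) (hi : i ≠ L) (w : Fin (m+1) → ZMod p)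
    (hw : ∀ j, j < i → w j = 0) (k : ℕ) (x : Fin (m+1) → ZMod p) :
    (sigmaPerm p (m+1) i ^ k) (tP p m w x)
      = tP p m (Function.update w i (w i + (k : ZMod p))) ((sigmaPerm p (m+1) i ^ k) x) := by
  have hiL : i < L := lt_of_le_of_ne (Fin.le_last i) hi
  by_cases hx : ∀ l, l < i → x l = 0
  · by_cases hc : ∀ j, j ≠ L → x j = w j
    · have hx' : ∀ l, l < i → Function.update x L (x L + 1) l = 0 := by
        intro l hl
        rw [Function.update_of_ne (ne_of_lt (hl.trans hiL))]
        exact hx l hl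
      have hc2 : ∀ j, j ≠ L → Function.update x i (x i + (k : ZMod p)) j
          = Function.update w i (w i + (k : ZMod p)) j := by
        intro j hj
        by_cases hji : j = i
        · subst hji
          rw [Function.update_self, Function.update_self, hc _ hi]
        · rw [Function.update_of_ne hji, Function.update_of_ne hji]
          exact hc j hj
      rw [tP_apply, if_pos hc, sigma_pow_apply, if_pos hx', sigma_pow_apply, if_pos hx,
        tP_apply, if_pos hc2, Function.update_of_ne hi, Function.update_of_ne (Ne.symm hi),
        Function.update_comm (Ne.symm hi)]
    · have hc2 : ¬ ∀ j, j ≠ L → Function.update x i (x i + (k : ZMod p)) j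
          = Function.update w i (w i + (k : ZMod p)) j := by
        intro h2
        apply hc
        intro j hj
        by_cases hji : j = i
        · subst hji
          have := h2 j hj
          rw [Function.update_self, Function.update_self] at this
          exact add_right_cancel this
        · have := h2 j hj
          rwa [Function.update_of_ne hji, Function.update_of_ne hji] at this
      rw [tP_apply, if_neg hc, sigma_pow_apply, if_pos hx, tP_apply, if_neg hc2]
  · push_neg at hx
    obtain ⟨l, hl, hl0⟩ := hx
    have hlL : l ≠ L := ne_of_lt (hl.trans hiL)
    have hxne : ¬ ∀ l', l' < i → x l' = 0 := by
      intro h; exact hl0 (h l hl)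
    have hcne : ¬ ∀ j, j ≠ L → x j = w j := by
      intro h; exact hl0 ((h l hlL).trans (hw l hl))
    have hc2 : ¬ ∀ j, j ≠ L → x j = Function.update w i (w i + (k : ZMod p)) j := by
      intro h
      have := h l hlL
      rw [Function.update_of_ne (ne_of_lt hl), hw l hl] at this
      exact hl0 this
    rw [tP_apply, if_neg hcne, sigma_pow_apply, if_neg hxne, tP_apply, if_neg hc2]

lemma key_conj (i : Fin (m+1)) (hi : i ≠ L) (w : Fin (m+1) → ZMod p)
    (hw : ∀ j, j < i → w j = 0) (k : ℕ) :
    sigmaPerm p (m+1) i ^ k * tP p m w * (sigmaPerm p (m+1) i ^ k)⁻¹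
      = tP p m (Function.update w i (w i + (k : ZMod p))) := by
  refine Equiv.ext fun x => ?_
  show (sigmaPerm p (m+1) i ^ k) (tP p m w ((sigmaPerm p (m+1) i ^ k)⁻¹ x)) = _
  rw [key_fun p m i hi w hw k, ← Equiv.Perm.mul_apply (sigmaPerm p (m+1) i ^ k), mul_inv_cancel,
    Equiv.Perm.one_apply]

end AuxDev3

section AuxDev4

variable (m : ℕ)

local notation "L" => Fin.last m

lemma sigma_mem_PSyl {n : ℕ} (i : Fin n) : sigmaPerm p n i ∈ PSyl p n :=
  Subgroup.subset_closure ⟨i, rfl⟩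

lemma Abase_le_PSyl {n : ℕ} (hn : 1 ≤ n) : Abase p n hn ≤ PSyl p n := by
  rw [Abase, Subgroup.closure_le]
  rintro x ⟨g, hg, rfl⟩
  exact mul_mem (mul_mem hg (sigma_mem_PSyl p _)) (inv_mem hg)

lemma conj_mem_Abase {n : ℕ} (hn : 1 ≤ n) {h a : Equiv.Perm (Fin n → ZMod p)}
    (hh : h ∈ PSyl p n) (ha : a ∈ Abase p n hn) : h * a * h⁻¹ ∈ Abase p n hn := by
  refine Subgroup.closure_induction ?_ ?_ ?_ ?_ ha
  · rintro x ⟨g, hg, rfl⟩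
    refine Subgroup.subset_closure ⟨h * g, mul_mem hh hg, by group⟩
  · simpa using one_mem (Abase p n hn)
  · intro x y _ _ hx hy
    have : h * (x * y) * h⁻¹ = (h * x * h⁻¹) * (h * y * h⁻¹) := by group
    rw [this]; exact mul_mem hx hy
  · intro x _ hx
    have : h * x⁻¹ * h⁻¹ = (h * x * h⁻¹)⁻¹ := by group
    rw [this]; exact inv_mem hx

lemma ne_last_iff_lt (j : Fin (m+1)) : j ≠ L ↔ j < L := by
  constructor
  · exact fun h => lt_of_le_of_ne (Fin.le_last j) h
  · exact fun h => ne_of_lt h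

lemma sigma_last_eq_tP : sigmaPerm p (m+1) L = tP p m 0 := by
  refine Equiv.ext fun x => ?_
  have hcond : (∀ l, l < L → x l = 0) ↔ (∀ j, j ≠ L → x j = (0 : ZMod p)) := by
    constructor
    · intro h j hj; exact h j ((ne_last_iff_lt m j).mp hj)
    · intro h l hl; exact h l (ne_of_lt hl)
  rw [tP_apply]
  by_cases hc : ∀ l, l < L → x l = 0
  · rw [if_pos (by intro j hj; exact hcond.mp hc j hj)]
    funext j
    by_cases hj : j = L
    · subst hj
      show sigmaFun p (m+1) _ x _ = _
      rw [sigmaFun, if_pos ⟨rfl, hc⟩, Function.update_self]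
    · show sigmaFun p (m+1) _ x _ = _
      rw [sigmaFun, if_neg (fun h => hj h.1), Function.update_of_ne hj]
  · rw [if_neg (fun h => hc fun l hl => h l (ne_of_lt hl))]
    funext j
    show sigmaFun p (m+1) _ x _ = _
    rw [sigmaFun, if_neg (fun h => hc h.2)]

lemma tP_mem_Abase [NeZero p] (v : Fin (m+1) → ZMod p) :
    tP p m v ∈ Abase p (m+1) (Nat.le_add_left 1 m) := by
  suffices H : ∀ d : ℕ, ∀ v : Fin (m+1) → ZMod p, (∀ j : Fin (m+1), j.val < m - d → v j = 0) →
      tP p m v ∈ Abase p (m+1) (Nat.le_add_left 1 m) by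
    exact H m v (fun j hj => absurd hj (by omega))
  intro d
  induction d with
  | zero =>
      intro v hv
      have : tP p m v = tP p m 0 := by
        refine tP_congr p m v 0 fun j hj => ?_
        exact hv j (by
          have := (ne_last_iff_lt m j).mp hj
          simpa [Fin.lt_iff_val_lt_val] using this)
      rw [this, ← sigma_last_eq_tP]
      refine Subgroup.subset_closure ⟨1, one_mem _, ?_⟩
      rw [one_mul, inv_one, mul_one]
      congr 1
  | succ d ih =>
      intro v hv
      by_cases hdm : d < m
      · set i : Fin (m+1) := ⟨m - (d+1), by omega⟩ with hidef
        have hi : i ≠ L := by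
          refine Fin.ne_of_val_ne ?_
          show m - (d+1) ≠ m
          omega
        set w := Function.update v i 0 with hwdef
        have hwih : ∀ j : Fin (m+1), j.val < m - d → w j = 0 := by
          intro j hj
          by_cases hji : j = i
          · subst hji; simp [hwdef]
          · rw [hwdef, Function.update_of_ne hji]
            refine hv j ?_
            have : j.val ≠ m - (d+1) := fun h => hji (Fin.ext (by simpa [hidef] using h))
            omega
        have hwlt : ∀ j : Fin (m+1), j < i → w j = 0 := by
          intro j hj
          have hj' : j.val < m - (d+1) := hj
          rw [hwdef, Function.update_of_ne (ne_of_lt hj)]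
          exact hv j hj'
        have hkey := key_conj p m i hi w hwlt (v i).val
        have hupd : Function.update w i (w i + ((v i).val : ZMod p)) = v := by
          funext j
          by_cases hji : j = i
          · subst hji
            rw [Function.update_self, hwdef, Function.update_self, zero_add,
              ZMod.natCast_val, ZMod.cast_id]
          · rw [Function.update_of_ne hji, hwdef, Function.update_of_ne hji]
        rw [hupd] at hkey
        rw [← hkey]
        exact conj_mem_Abase p _ (pow_mem (sigma_mem_PSyl p i) _) (ih w hwih)
      · exact ih v (fun j hj => hv j (by omega))

end AuxDev4

section AuxDev5

variable (m : ℕ)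

local notation "L" => Fin.last m

lemma trP_sum_mem {ι : Type*} (hn' : 1 ≤ m + 1) (s : Finset ι)
    (F : ι → (Fin (m+1) → ZMod p) → ZMod p)
    (h : ∀ v ∈ s, trP p m (F v) ∈ Abase p (m+1) hn') :
    trP p m (∑ v ∈ s, F v) ∈ Abase p (m+1) hn' := by
  classical
  induction s using Finset.cons_induction with
  | empty =>
      rw [Finset.sum_empty, trP_zero]
      exact one_mem _
  | cons a s ha ih =>
      rw [Finset.sum_cons, ← trP_mul]
      exact mul_mem (h a (Finset.mem_cons_self a s))
        (ih fun v hv => h v (Finset.mem_cons_of_mem hv))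

lemma trP_mem_Abase [NeZero p] (f : (Fin (m+1) → ZMod p) → ZMod p) :
    trP p m f ∈ Abase p (m+1) (Nat.le_add_left 1 m) := by
  classical
  set s : Finset (Fin (m+1) → ZMod p) := Finset.univ.filter (fun v => v L = 0) with hs
  set F : (Fin (m+1) → ZMod p) → (Fin (m+1) → ZMod p) → ZMod p :=
    fun v x => f v * (if ∀ j, j ≠ L → x j = v j then (1 : ZMod p) else 0) with hF
  have hdecomp : trP p m f = trP p m (∑ v ∈ s, F v) := by
    refine trP_congr p m _ _ fun x hx => ?_
    have hxs : x ∈ s := by simp [hs, hx]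
    rw [Finset.sum_apply]
    rw [Finset.sum_eq_single_of_mem x hxs]
    · show f x = f x * _
      rw [if_pos (show ∀ j : Fin (m+1), j ≠ L → x j = x j from fun j _ => rfl), mul_one]
    · intro v hv hvx
      show F v x = 0
      rw [hF]
      simp only
      rw [if_neg, mul_zero]
      intro h
      apply hvx
      funext j
      by_cases hj : j = L
      · subst hj
        rw [(Finset.mem_filter.mp hv).2, hx]
      · exact (h j hj).symm
  rw [hdecomp]
  refine trP_sum_mem p m _ s F fun v _ => ?_
  have hFv : F v = (f v).val •
      (fun x => if ∀ j, j ≠ L → x j = v j then (1 : ZMod p) else 0) := by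
    funext x
    show f v * _ = (f v).val • _
    rw [nsmul_eq_mul, ZMod.natCast_val, ZMod.cast_id]
  have : trP p m (F v) = tP p m v ^ (f v).val := by
    rw [hFv, ← trP_pow]
    rfl
  rw [this]
  exact pow_mem (tP_mem_Abase p m v) _

lemma centralizer_le_Abase (hp : p.Prime) :
    Subgroup.centralizer
        ((Abase p (m+1) (Nat.le_add_left 1 m) : Subgroup (Equiv.Perm (Fin (m+1) → ZMod p))) :
          Set (Equiv.Perm (Fin (m+1) → ZMod p)))
      ≤ Abase p (m+1) (Nat.le_add_left 1 m) := by
  haveI : Fact p.Prime := ⟨hp⟩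
  haveI : NeZero p := ⟨hp.pos.ne'⟩
  intro c hc
  rw [Subgroup.mem_centralizer_iff] at hc
  -- pointwise commutation with the fiber translations
  have hcomm : ∀ v x, tP p m v (c x) = c (tP p m v x) := by
    intro v x
    have h := hc (tP p m v) (tP_mem_Abase p m v)
    exact DFunLike.congr_fun h x
  -- c fixes all coordinates except the last
  have hfix : ∀ x : Fin (m+1) → ZMod p, ∀ j, j ≠ L → c x j = x j := by
    intro x
    by_contra hcond
    push_neg at hcond
    have h1 : tP p m x x = Function.update x L (x L + 1) := by
      rw [tP_apply, if_pos (fun j _ => rfl)]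
    have h2 : tP p m x (c x) = c x := by
      rw [tP_apply, if_neg]
      intro h
      obtain ⟨j, hj, hj'⟩ := hcond
      exact hj' (h j hj)
    have := hcomm x x
    rw [h2, h1] at this
    have heq : x = Function.update x L (x L + 1) := c.injective this
    have := congr_fun heq L
    rw [Function.update_self] at this
    exact one_ne_zero (by linear_combination -this)
  -- the commutation relation on the last coordinate
  have hshift : ∀ x : Fin (m+1) → ZMod p,
      c (Function.update x L (x L + 1)) = Function.update (c x) L (c x L + 1) := by
    intro x
    have h1 : tP p m x x = Function.update x L (x L + 1) := by
      rw [tP_apply, if_pos (fun j _ => rfl)]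
    have h2 : tP p m x (c x) = Function.update (c x) L (c x L + 1) := by
      rw [tP_apply, if_pos (fun j hj => hfix x j hj)]
    have := hcomm x x
    rw [h2, h1] at this
    exact this.symm
  have hshiftk : ∀ k : ℕ, ∀ x : Fin (m+1) → ZMod p,
      c (Function.update x L (x L + (k : ZMod p)))
        = Function.update (c x) L (c x L + (k : ZMod p)) := by
    intro k
    induction k with
    | zero => intro x; simp
    | succ k ih =>
        intro x
        have hy : Function.update x L (x L + ((k+1 : ℕ) : ZMod p))
            = Function.update (Function.update x L (x L + (k : ZMod p))) L
                ((Function.update x L (x L + (k : ZMod p))) L + 1) := by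
          rw [Function.update_self, Function.update_idem]
          push_cast
          ring_nf
        rw [hy, hshift, ih, Function.update_self, Function.update_idem]
        push_cast
        ring_nf
  -- identify c with a fiber translation
  have hceq : c = trP p m (fun x => c x L - x L) := by
    refine Equiv.ext fun x => ?_
    set x0 := Function.update x L 0 with hx0
    have hx0L : x0 L = 0 := Function.update_self _ _ _
    have hxeq : x = Function.update x0 L (x0 L + ((x L).val : ZMod p)) := by
      rw [hx0L, zero_add, ZMod.natCast_val, ZMod.cast_id, hx0, Function.update_idem,
        Function.update_eq_self]
    have hcx : c x = Function.update (c x0) L (c x0 L + x L) := by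
      conv_lhs => rw [hxeq]
      rw [hshiftk, ZMod.natCast_val, ZMod.cast_id]
    rw [trP_apply, hcx]
    funext j
    by_cases hj : j = L
    · subst hj
      rw [Function.update_self, Function.update_self, ← hx0, hx0L, sub_zero, add_comm]
    · rw [Function.update_of_ne hj, Function.update_of_ne hj, hfix x0 j hj, hx0,
        Function.update_of_ne hj]
  rw [hceq]
  exact trP_mem_Abase p m _

end AuxDev5

/-- Both `A^{n-1}` and `P_n` are self-centralizing in `Sym(F_p^n)`. -/
theorem centralizer_Abase_le_and_centralizer_PSyl_le (hp : p.Prime) (hn : 1 ≤ n) :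
    Subgroup.centralizer ((Abase p n hn : Subgroup (Equiv.Perm (Fin n → ZMod p))) :
        Set (Equiv.Perm (Fin n → ZMod p))) ≤ Abase p n hn ∧
    Subgroup.centralizer ((PSyl p n : Subgroup (Equiv.Perm (Fin n → ZMod p))) :
        Set (Equiv.Perm (Fin n → ZMod p))) ≤ PSyl p n := by
  obtain ⟨m, rfl⟩ : ∃ m, n = m + 1 := ⟨n - 1, by omega⟩
  have hcent : Subgroup.centralizer
      ((Abase p (m+1) hn : Subgroup (Equiv.Perm (Fin (m+1) → ZMod p))) :
        Set (Equiv.Perm (Fin (m+1) → ZMod p))) ≤ Abase p (m+1) hn :=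
    centralizer_le_Abase p m hp
  refine ⟨hcent, ?_⟩
  intro c hc
  have h2 : ((Abase p (m+1) hn : Subgroup (Equiv.Perm (Fin (m+1) → ZMod p))) :
      Set (Equiv.Perm (Fin (m+1) → ZMod p))) ⊆ (PSyl p (m+1) : Subgroup _) :=
    SetLike.coe_subset_coe.mpr (Abase_le_PSyl p hn)
  exact Abase_le_PSyl p hn (hcent (Subgroup.centralizer_le h2 hc))
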